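/- Let X and Y be separable metrizable spaces and let f : X → Y. If Player I has a winning strategy in the game G(f), then there exists a compact subset K of X such that Player I has a winning strategy in the game G(f↾K), where f↾K : K → Y is the restriction of f to K with the subspace topology. -/

import Mathlib

open Filter Topology TopologicalSpace

/-- A set is Fσ if it is a countable union of closed sets. -/
def IsFsigma {X : Type*} [TopologicalSpace X] (S : Set X) : Prop :=
  ∃ F : ℕ → Set X, (∀ n, IsClosed (F n)) ∧ S = ⋃ n, F n

/-- `f` is Baire class 1 if preimages of open sets are Fσ. -/
def BaireClassOne {X Y : Type*} [TopologicalSpace X] [TopologicalSpace Y] (f : X → Y) : Prop :=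
  ∀ V : Set Y, IsOpen V → IsFsigma (f ⁻¹' V)

/-- A sequence of (open) sets is convergent to `x` if it is ⊆-decreasing, and is a
local basis at `x`: every term contains `x` and every neighborhood of `x`
contains some term. -/
def SeqConvergesTo {X : Type*} [TopologicalSpace X] (U : ℕ → Set X) (x : X) : Prop :=
  (∀ n, U (n + 1) ⊆ U n) ∧ (∀ n, x ∈ U n) ∧
    ∀ V : Set X, IsOpen V → x ∈ V → ∃ n, U n ⊆ V

/-- A valid partial play of Player I in `G(f)`: a ⊆-decreasing finite sequence of
nonempty open sets. -/
def ValidIPlay {X : Type*} [TopologicalSpace X] (l : List (Set X)) : Prop :=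
  (∀ U ∈ l, IsOpen U ∧ U.Nonempty) ∧ l.Chain' (fun a b => b ⊆ a)

/-- `σ` (mapping partial plays of Player I, i.e. nonempty ⊆-decreasing finite sequences of
nonempty open subsets of `X`, to elements of `ran f`) is a winning strategy for
Player II in the game `G(f)`: for every run `(U n)` of Player I, letting
`y n = σ [U 0, …, U n]`, if `(U n)` converges to some `x` then `(y n)` tends to `f x`. -/
def IsWinningII {X Y : Type*} [TopologicalSpace X] [TopologicalSpace Y]
    (f : X → Y) (σ : List (Set X) → Y) : Prop :=
  (∀ l : List (Set X), l ≠ [] → ValidIPlay l → σ l ∈ Set.range f) ∧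
  ∀ U : ℕ → Set X, (∀ n, IsOpen (U n)) → (∀ n, (U n).Nonempty) →
    (∀ n, U (n + 1) ⊆ U n) →
    ∀ x : X, SeqConvergesTo U x →
      Tendsto (fun n => σ ((List.range (n + 1)).map U)) atTop (𝓝 (f x))

/-- `τ` (mapping finite sequences of elements of `ran f`, including the empty one,
to nonempty open subsets of `X`, obeying the ⊆-decreasing rule along any run) is a
winning strategy for Player I in the game `G(f)`: for every run `(y n)` of Player II
with values in `ran f`, letting `U n = τ [y 0, …, y (n-1)]`, the sequence `(U n)`
converges to some `x` while `(y n)` does not tend to `f x`. -/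
def IsWinningI {X Y : Type*} [TopologicalSpace X] [TopologicalSpace Y]
    (f : X → Y) (τ : List Y → Set X) : Prop :=
  (∀ l : List Y, (∀ y ∈ l, y ∈ Set.range f) → IsOpen (τ l) ∧ (τ l).Nonempty) ∧
  (∀ (l : List Y) (y : Y), (∀ z ∈ l, z ∈ Set.range f) → y ∈ Set.range f →
      τ (l ++ [y]) ⊆ τ l) ∧
  ∀ y : ℕ → Y, (∀ n, y n ∈ Set.range f) →
    ∃ x : X, SeqConvergesTo (fun n => τ ((List.range n).map y)) x ∧
      ¬ Tendsto y atTop (𝓝 (f x))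

namespace PlayerIAux

set_option linter.unusedSectionVars false
attribute [local instance] Classical.propDecidable

variable {X Y : Type*} [TopologicalSpace X] [MetricSpace Y]

/-- a run is valid if all its values are in the range of `f` -/
def Valid (f : X → Y) (y : ℕ → Y) : Prop := ∀ n, y n ∈ Set.range f

/-- the position (list of II's moves) of length `n` along run `y` -/
def pos (y : ℕ → Y) (n : ℕ) : List Y := (List.range n).map y

lemma pos_succ (y : ℕ → Y) (n : ℕ) : pos y (n+1) = pos y n ++ [y n] := by
  simp [pos, List.range_succ]

lemma pos_zero (y : ℕ → Y) : pos y 0 = [] := rfl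

lemma mem_pos {f : X → Y} {y : ℕ → Y} (hy : Valid f y) (n : ℕ) :
    ∀ z ∈ pos y n, z ∈ Set.range f := by
  intro z hz
  simp only [pos, List.mem_map, List.mem_range] at hz
  obtain ⟨i, -, rfl⟩ := hz
  exact hy i

lemma pos_congr {y y' : ℕ → Y} {n : ℕ} (h : ∀ i < n, y i = y' i) :
    pos y n = pos y' n := by
  simp only [pos]
  apply List.map_congr_left
  intro i hi
  exact h i (List.mem_range.mp hi)

variable (f : X → Y) (τ : List Y → Set X)

section withWin

variable (hτ : IsWinningI f τ)

/-- some point of `X` -/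
noncomputable def x0 : X := (hτ.1 [] (by simp)).2.choose

/-- a default value in the range of `f` -/
noncomputable def y0 : Y := f (x0 f τ hτ)

lemma y0_mem : y0 f τ hτ ∈ Set.range f := ⟨_, rfl⟩

/-- the limit of the run `y` (chosen via the winning strategy guarantee). -/
noncomputable def xlim (y : ℕ → Y) : X :=
  if h : Valid f y then (hτ.2.2 y h).choose else x0 f τ hτ

lemma xlim_spec {y : ℕ → Y} (hy : Valid f y) :
    SeqConvergesTo (fun n => τ (pos y n)) (xlim f τ hτ y) ∧
      ¬ Tendsto y atTop (𝓝 (f (xlim f τ hτ y))) := by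
  rw [xlim, dif_pos hy]
  exact (hτ.2.2 y hy).choose_spec

lemma xlim_mem {y : ℕ → Y} (hy : Valid f y) (n : ℕ) :
    xlim f τ hτ y ∈ τ (pos y n) := ((xlim_spec f τ hτ hy).1).2.1 n

lemma xlim_basis {y : ℕ → Y} (hy : Valid f y) {V : Set X} (hV : IsOpen V)
    (hx : xlim f τ hτ y ∈ V) : ∃ n, τ (pos y n) ⊆ V :=
  ((xlim_spec f τ hτ hy).1).2.2 V hV hx

lemma xlim_congr {y y' : ℕ → Y} (h : y = y') : xlim f τ hτ y = xlim f τ hτ y' := by rw [h]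

include hτ in
/-- the strategy is antitone along valid positions -/
lemma tau_anti {y : ℕ → Y} (hy : Valid f y) {n m : ℕ} (h : n ≤ m) :
    τ (pos y m) ⊆ τ (pos y n) := by
  induction m, h using Nat.le_induction with
  | base => exact subset_rfl
  | succ m hnm ih =>
      refine subset_trans ?_ ih
      rw [pos_succ]
      exact hτ.2.1 (pos y m) (y m) (mem_pos hy m) (hy m)

/-- `BL k y n` : the set of limits of `(k-1)`-guided continuations of the
position `pos y n`. -/
noncomputable def BL (k : ℕ) : (ℕ → Y) → ℕ → Set X :=
  Nat.rec
    (fun y n =>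
      {x | ∃ γ : ℕ → Y, Valid f γ ∧ (∀ i < n, γ i = y i) ∧ x = xlim f τ hτ γ})
    (fun _ ih y n =>
      {x | ∃ γ : ℕ → Y, Valid f γ ∧ (∀ i < n, γ i = y i) ∧
        (∀ i, n ≤ i → ∃ w ∈ ih γ i, γ i = f w) ∧ x = xlim f τ hτ γ}) k

lemma BL_zero (y : ℕ → Y) (n : ℕ) : BL f τ hτ 0 y n =
    {x | ∃ γ : ℕ → Y, Valid f γ ∧ (∀ i < n, γ i = y i) ∧ x = xlim f τ hτ γ} := rfl

lemma BL_succ (k : ℕ) (y : ℕ → Y) (n : ℕ) : BL f τ hτ (k+1) y n =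
    {x | ∃ γ : ℕ → Y, Valid f γ ∧ (∀ i < n, γ i = y i) ∧
        (∀ i, n ≤ i → ∃ w ∈ BL f τ hτ k γ i, γ i = f w) ∧ x = xlim f τ hτ γ} := rfl

lemma mem_BL_succ {k : ℕ} {y : ℕ → Y} {n : ℕ} {x : X} : x ∈ BL f τ hτ (k+1) y n ↔
    ∃ γ : ℕ → Y, Valid f γ ∧ (∀ i < n, γ i = y i) ∧
        (∀ i, n ≤ i → ∃ w ∈ BL f τ hτ k γ i, γ i = f w) ∧ x = xlim f τ hτ γ := Iff.rfl

lemma mem_BL_zero {y : ℕ → Y} {n : ℕ} {x : X} : x ∈ BL f τ hτ 0 y n ↔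
    ∃ γ : ℕ → Y, Valid f γ ∧ (∀ i < n, γ i = y i) ∧ x = xlim f τ hτ γ := Iff.rfl

lemma BL_congr : ∀ (k : ℕ) {y y' : ℕ → Y} {n : ℕ}, (∀ i < n, y i = y' i) →
    BL f τ hτ k y n = BL f τ hτ k y' n := by
  intro k y y' n h
  cases k with
  | zero =>
      ext x
      constructor <;> rintro ⟨γ, h1, h2, h3⟩
      · exact ⟨γ, h1, fun i hi => (h2 i hi).trans (h i hi), h3⟩
      · exact ⟨γ, h1, fun i hi => (h2 i hi).trans (h i hi).symm, h3⟩
  | succ k =>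
      ext x
      constructor <;> rintro ⟨γ, h1, h2, h3, h4⟩
      · exact ⟨γ, h1, fun i hi => (h2 i hi).trans (h i hi), h3, h4⟩
      · exact ⟨γ, h1, fun i hi => (h2 i hi).trans (h i hi).symm, h3, h4⟩

/-- `BL` is antitone in the level `k`. -/
lemma BL_succ_subset : ∀ (k : ℕ) (y : ℕ → Y) (n : ℕ),
    BL f τ hτ (k+1) y n ⊆ BL f τ hτ k y n := by
  intro k
  induction k with
  | zero => rintro y n x ⟨γ, h1, h2, h3, h4⟩; exact ⟨γ, h1, h2, h4⟩
  | succ k ih =>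
      rintro y n x ⟨γ, h1, h2, h3, h4⟩
      refine ⟨γ, h1, h2, fun i hi => ?_, h4⟩
      obtain ⟨w, hw, hwe⟩ := h3 i hi
      exact ⟨w, ih γ i hw, hwe⟩

lemma BL_level_le {k j : ℕ} (h : k ≤ j) (y : ℕ → Y) (n : ℕ) :
    BL f τ hτ j y n ⊆ BL f τ hτ k y n := by
  induction j, h using Nat.le_induction with
  | base => exact subset_rfl
  | succ j hkj ih => exact subset_trans (BL_succ_subset f τ hτ j y n) ih

/-- `BL (k+1)` is antitone in the cut position, along `k`-guided moves. -/
lemma BL_node_anti {k : ℕ} {y : ℕ → Y} {n m : ℕ} (hnm : n ≤ m)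
    (hg : ∀ i, n ≤ i → i < m → ∃ w ∈ BL f τ hτ k y i, y i = f w) :
    BL f τ hτ (k+1) y m ⊆ BL f τ hτ (k+1) y n := by
  intro x hx
  obtain ⟨γ, h1, h2, h3, h4⟩ := (mem_BL_succ f τ hτ).mp hx
  refine (mem_BL_succ f τ hτ).mpr ⟨γ, h1, fun i hi => h2 i (lt_of_lt_of_le hi hnm), fun i hi => ?_, h4⟩
  rcases lt_or_ge i m with him | him
  · obtain ⟨w, hw, hwe⟩ := hg i hi him
    have hcg : BL f τ hτ k y i = BL f τ hτ k γ i :=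
      BL_congr f τ hτ k (fun j hj => (h2 j (hj.trans him)).symm)
    exact ⟨w, hcg ▸ hw, (h2 i him).trans hwe⟩
  · exact h3 i him

/-- greedy construction: a `k`-guided continuation exists provided `BL k` is
everywhere nonempty. -/
lemma greedy (k : ℕ)
    (hne : ∀ (y : ℕ → Y), Valid f y → ∀ n, (BL f τ hτ k y n).Nonempty)
    (y : ℕ → Y) (hy : Valid f y) (n : ℕ) :
    ∃ γ : ℕ → Y, Valid f γ ∧ (∀ i < n, γ i = y i) ∧
      (∀ i, n ≤ i → ∃ w ∈ BL f τ hτ k γ i, γ i = f w) := by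
  classical
  set wpick : (ℕ → Y) → ℕ → X := fun ρ c =>
    if h : Valid f ρ then (hne ρ h c).some else x0 f τ hτ with hwpick
  set g : ℕ → (ℕ → Y) := fun j => Nat.rec
    (fun i => if i < n then y i else y0 f τ hτ)
    (fun j gj => fun i => if i = n + j then f (wpick gj (n+j)) else gj i) j with hg
  have hg0 : ∀ i, g 0 i = if i < n then y i else y0 f τ hτ := fun i => rfl
  have hgs : ∀ j i, g (j+1) i = if i = n + j then f (wpick (g j) (n+j)) else g j i :=
    fun j i => rfl
  set γ : ℕ → Y := fun i => if i < n then y i else f (wpick (g (i-n)) i) with hγ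
  have hgv : ∀ j, Valid f (g j) := by
    intro j
    induction j with
    | zero => intro i; rw [hg0]; split
              · exact hy i
              · exact y0_mem f τ hτ
    | succ j ih => intro i; rw [hgs]; split
                   · exact ⟨_, rfl⟩
                   · exact ih i
  have hstab : ∀ j i, i < n + j → g j i = γ i := by
    intro j
    induction j with
    | zero =>
        intro i hi
        rw [Nat.add_zero] at hi
        rw [hg0, if_pos hi, hγ]
        simp [hi]
    | succ j ih =>
        intro i hi
        rw [hgs]
        by_cases he : i = n + j
        · subst he
          have h1 : ¬ (n + j < n) := by omega
          have h2 : n + j - n = j := by omega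
          rw [if_pos rfl, hγ]
          simp only [h1, if_false, h2]
        · rw [if_neg he]
          exact ih i (by omega)
  have hγv : Valid f γ := by
    intro i
    rw [hγ]
    dsimp only
    split
    · exact hy i
    · exact ⟨_, rfl⟩
  refine ⟨γ, hγv, fun i hi => by rw [hγ]; simp [hi], fun i hi => ?_⟩
  have hnlt : ¬ (i < n) := by omega
  have hv : Valid f (g (i - n)) := hgv _
  have hmem : wpick (g (i-n)) i ∈ BL f τ hτ k (g (i-n)) i := by
    rw [hwpick]
    dsimp only
    rw [dif_pos hv]
    exact (hne (g (i-n)) hv i).some_mem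
  have hcg : BL f τ hτ k (g (i-n)) i = BL f τ hτ k γ i :=
    BL_congr f τ hτ k (fun j hj => hstab (i-n) j (by omega))
  exact ⟨wpick (g (i-n)) i, hcg ▸ hmem, by rw [hγ]; simp [hnlt]⟩

/-- every cut has a `k`-guided continuation. -/
lemma exists_guided : ∀ (k : ℕ) (y : ℕ → Y), Valid f y → ∀ (n : ℕ),
    ∃ γ : ℕ → Y, Valid f γ ∧ (∀ i < n, γ i = y i) ∧
      (∀ i, n ≤ i → ∃ w ∈ BL f τ hτ k γ i, γ i = f w) := by
  intro k
  induction k with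
  | zero =>
      refine greedy f τ hτ 0 (fun y hy n => ?_)
      refine ⟨xlim f τ hτ (fun i => if h : i < n then y i else y0 f τ hτ), ?_⟩
      refine (mem_BL_zero f τ hτ).mpr ⟨_, fun i => ?_, fun i hi => by simp [hi], rfl⟩
      split
      · exact hy i
      · exact y0_mem f τ hτ
  | succ k ih =>
      refine greedy f τ hτ (k+1) (fun y hy n => ?_)
      obtain ⟨γ, h1, h2, h3⟩ := ih y hy n
      exact ⟨xlim f τ hτ γ, (mem_BL_succ f τ hτ).mpr ⟨γ, h1, h2, h3, rfl⟩⟩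

lemma BL_nonempty (k : ℕ) {y : ℕ → Y} (hy : Valid f y) (n : ℕ) :
    (BL f τ hτ k y n).Nonempty := by
  cases k with
  | zero =>
      refine ⟨xlim f τ hτ (fun i => if h : i < n then y i else y0 f τ hτ), ?_⟩
      refine (mem_BL_zero f τ hτ).mpr ⟨_, fun i => ?_, fun i hi => by simp [hi], rfl⟩
      split
      · exact hy i
      · exact y0_mem f τ hτ
  | succ k =>
      obtain ⟨γ, h1, h2, h3⟩ := exists_guided f τ hτ k y hy n
      exact ⟨xlim f τ hτ γ, (mem_BL_succ f τ hτ).mpr ⟨γ, h1, h2, h3, rfl⟩⟩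


/-- The key dichotomy: there is a level `k₀`, a position (cut `n'` of a valid run `s`)
and a gap `δ > 0` such that below every `k₀`-guided extension of that position, the set
of limits of `k₀`-guided continuations contains two points with `f`-values `δ`-apart. -/
lemma exists_good : ∃ (k₀ : ℕ) (s : ℕ → Y) (n' : ℕ) (δ : ℝ), Valid f s ∧ 0 < δ ∧
    ∀ γ m, Valid f γ → (∀ i < n', γ i = s i) → n' < m →
      (∀ i, n' ≤ i → i < m → ∃ w ∈ BL f τ hτ k₀ γ i, γ i = f w) →
      ∃ w₁, w₁ ∈ BL f τ hτ (k₀+1) γ m ∧ ∃ w₂, w₂ ∈ BL f τ hτ (k₀+1) γ m ∧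
        δ < dist (f w₁) (f w₂) := by
  by_contra hbad
  push_neg at hbad
  -- step function for the chain
  have hstep : ∀ (k : ℕ) (yk : ℕ → Y) (mk : ℕ), Valid f yk →
      ∃ p : (ℕ → Y) × ℕ, Valid f p.1 ∧ (∀ i < mk, p.1 i = yk i) ∧ mk < p.2 ∧
        (∀ i, mk ≤ i → i < p.2 → ∃ w ∈ BL f τ hτ k p.1 i, p.1 i = f w) ∧
        ∀ w₁, w₁ ∈ BL f τ hτ (k+1) p.1 p.2 → ∀ w₂, w₂ ∈ BL f τ hτ (k+1) p.1 p.2 →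
          dist (f w₁) (f w₂) ≤ 1/(k+1) := by
    intro k yk mk hv
    obtain ⟨γ, m, h1, h2, h3, h4, h5⟩ :=
      hbad k yk mk (1/(k+1)) hv (by positivity)
    exact ⟨(γ, m), h1, h2, h3, h4, h5⟩
  -- the chain
  set C : ℕ → {p : (ℕ → Y) × ℕ // Valid f p.1} :=
    fun k => Nat.rec
      (⟨(fun _ => y0 f τ hτ, 0), fun _ => y0_mem f τ hτ⟩ :
        {p : (ℕ → Y) × ℕ // Valid f p.1})
      (fun k p => ⟨(hstep k p.1.1 p.1.2 p.2).choose,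
        (hstep k p.1.1 p.1.2 p.2).choose_spec.1⟩) k with hCdef
  set ys : ℕ → (ℕ → Y) := fun k => (C k).1.1 with hys
  set ms : ℕ → ℕ := fun k => (C k).1.2 with hms
  have hCs : ∀ k, (∀ i < ms k, ys (k+1) i = ys k i) ∧ ms k < ms (k+1) ∧
      (∀ i, ms k ≤ i → i < ms (k+1) → ∃ w ∈ BL f τ hτ k (ys (k+1)) i, ys (k+1) i = f w) ∧
      ∀ w₁, w₁ ∈ BL f τ hτ (k+1) (ys (k+1)) (ms (k+1)) →
        ∀ w₂, w₂ ∈ BL f τ hτ (k+1) (ys (k+1)) (ms (k+1)) →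
          dist (f w₁) (f w₂) ≤ 1/(k+1) := by
    intro k
    exact (hstep k (ys k) (ms k) (C k).2).choose_spec.2
  have hmmono : ∀ k j, k ≤ j → ms k ≤ ms j := by
    intro k j h
    induction j, h using Nat.le_induction with
    | base => exact le_rfl
    | succ j hkj ih => exact le_trans ih (le_of_lt (hCs j).2.1)
  have hmge : ∀ k, k ≤ ms k := by
    intro k
    induction k with
    | zero => exact Nat.zero_le _
    | succ k ih => exact Nat.succ_le_of_lt (lt_of_le_of_lt ih (hCs k).2.1)
  -- agreement
  have hagree : ∀ k j, k ≤ j → ∀ i < ms k, ys j i = ys k i := by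
    intro k j h
    induction j, h using Nat.le_induction with
    | base => intro i _; rfl
    | succ j hkj ih =>
        intro i hi
        have := (hCs j).1 i (lt_of_lt_of_le hi (hmmono k j hkj))
        rw [this]; exact ih i hi
  set β : ℕ → Y := fun i => ys (i+1) i with hβ
  have hβeq : ∀ k i, i < ms k → β i = ys k i := by
    intro k i hi
    rcases le_total (i+1) k with h | h
    · exact (hagree (i+1) k h i (lt_of_lt_of_le (Nat.lt_succ_self i)
        (hmge (i+1)))).symm
    · exact hagree k (i+1) h i hi
  have hβv : Valid f β := fun i => (C (i+1)).2 i
  -- locator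
  have hloc : ∀ K i, ms K ≤ i → ∃ j, K ≤ j ∧ ms j ≤ i ∧ i < ms (j+1) := by
    intro K i hKi
    set P : ℕ → Prop := fun j => ms j ≤ i with hP
    have hPK : P K := hKi
    have hKle : K ≤ i + 1 := le_trans (le_trans (hmge K) hKi) (Nat.le_succ i)
    set j := Nat.findGreatest P (i+1) with hj
    have hPj : P j := Nat.findGreatest_spec hKle hPK
    have hjK : K ≤ j := Nat.le_findGreatest hKle hPK
    have hji : j ≤ i := le_trans (hmge j) hPj
    have hnot : ¬ P (j+1) :=
      Nat.findGreatest_is_greatest (Nat.lt_succ_self j) (Nat.succ_le_succ hji)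
    exact ⟨j, hjK, hPj, lt_of_not_ge hnot⟩
  -- moves of β beyond cut (ms K) have witnesses at level K
  have hmoves : ∀ K i, ms K ≤ i → ∃ w, w ∈ BL f τ hτ K β i ∧ β i = f w := by
    intro K i hKi
    obtain ⟨j, hKj, hji, hij⟩ := hloc K i hKi
    obtain ⟨w, hw, hwe⟩ := (hCs j).2.2.1 i hji hij
    have hcg : BL f τ hτ j (ys (j+1)) i = BL f τ hτ j β i :=
      BL_congr f τ hτ j (fun i' hi' => (hβeq (j+1) i' (lt_trans hi' hij)).symm)
    refine ⟨w, BL_level_le f τ hτ hKj β i (hcg ▸ hw), ?_⟩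
    rw [hβeq (j+1) i hij]; exact hwe
  -- the limit is in the controlled sets
  have hxmem : ∀ k, xlim f τ hτ β ∈ BL f τ hτ (k+1) β (ms (k+1)) := by
    intro k
    refine (mem_BL_succ f τ hτ).mpr ⟨β, hβv, fun i _ => rfl, fun i hi => ?_, rfl⟩
    obtain ⟨w, hw, hwe⟩ := hmoves (k+1) i hi
    exact ⟨w, BL_succ_subset f τ hτ k β i hw, hwe⟩
  -- each late move value is the value of a point in the controlled set
  have hmove2 : ∀ k i, ms (k+1) ≤ i →
      ∃ w, w ∈ BL f τ hτ (k+1) β (ms (k+1)) ∧ β i = f w := by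
    intro k i hi
    obtain ⟨w, hw, hwe⟩ := hmoves (k+1) i hi
    refine ⟨w, ?_, hwe⟩
    refine BL_node_anti f τ hτ hi (fun i' hi' _ => ?_) hw
    obtain ⟨w', hw', hwe'⟩ := hmoves (k+1) i' hi'
    exact ⟨w', BL_succ_subset f τ hτ k β i' hw', hwe'⟩
  -- transport the pairwise bound
  have hbound : ∀ k i, ms (k+1) ≤ i → dist (β i) (f (xlim f τ hτ β)) ≤ 1/(k+1) := by
    intro k i hi
    obtain ⟨w, hw, hwe⟩ := hmove2 k i hi
    have hcg : BL f τ hτ (k+1) β (ms (k+1)) =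
        BL f τ hτ (k+1) (ys (k+1)) (ms (k+1)) :=
      BL_congr f τ hτ (k+1) (fun i' hi' => hβeq (k+1) i' hi')
    rw [hwe]
    exact (hCs k).2.2.2 w (hcg ▸ hw) (xlim f τ hτ β) (hcg ▸ hxmem k)
  -- β converges to f (xlim β): contradiction
  have htends : Tendsto β atTop (𝓝 (f (xlim f τ hτ β))) := by
    rw [Metric.tendsto_atTop]
    intro ε hε
    obtain ⟨k, hk⟩ := exists_nat_one_div_lt hε
    refine ⟨ms (k+1), fun n hn => lt_of_le_of_lt (hbound k n hn) ?_⟩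
    exact_mod_cast hk
  exact (xlim_spec f τ hτ hβv).2 htends

end withWin

/-- All the data extracted by `exists_good`. -/
structure Ctx (f : X → Y) (τ : List Y → Set X) where
  hτ : IsWinningI f τ
  k₀ : ℕ
  s : ℕ → Y
  n' : ℕ
  δ : ℝ
  hs : Valid f s
  hδ : 0 < δ
  hpair : ∀ γ m, Valid f γ → (∀ i < n', γ i = s i) → n' < m →
      (∀ i, n' ≤ i → i < m → ∃ w ∈ BL f τ hτ k₀ γ i, γ i = f w) →
      ∃ w₁, w₁ ∈ BL f τ hτ (k₀+1) γ m ∧ ∃ w₂, w₂ ∈ BL f τ hτ (k₀+1) γ m ∧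
        δ < dist (f w₁) (f w₂)

variable (c : Ctx f τ)

/-- a run compatible with the good position and everywhere `k₀`-guided beyond it. -/
def OKRun (ρ : ℕ → Y) : Prop :=
  Valid f ρ ∧ (∀ i < c.n', ρ i = c.s i) ∧
    ∀ i, c.n' ≤ i → ∃ w ∈ BL f τ c.hτ c.k₀ ρ i, ρ i = f w

/-- the two chosen continuations with `δ`-separated `f`-limit-values. -/
noncomputable def pairData (ρ : ℕ → Y) (m : ℕ) : (ℕ → Y) × (ℕ → Y) :=
  if h : OKRun f τ c ρ ∧ c.n' < m then
    (((mem_BL_succ f τ c.hτ).mp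
        (c.hpair ρ m h.1.1 (fun i hi => h.1.2.1 i hi) h.2
          (fun i hi _ => h.1.2.2 i hi)).choose_spec.1).choose,
     ((mem_BL_succ f τ c.hτ).mp
        (c.hpair ρ m h.1.1 (fun i hi => h.1.2.1 i hi) h.2
          (fun i hi _ => h.1.2.2 i hi)).choose_spec.2.choose_spec.1).choose)
  else (ρ, ρ)

lemma pairData_spec {ρ : ℕ → Y} {m : ℕ} (h : OKRun f τ c ρ ∧ c.n' < m) :
    (Valid f (pairData f τ c ρ m).1 ∧ (∀ i < m, (pairData f τ c ρ m).1 i = ρ i) ∧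
      (∀ i, m ≤ i → ∃ w ∈ BL f τ c.hτ c.k₀ (pairData f τ c ρ m).1 i,
        (pairData f τ c ρ m).1 i = f w)) ∧
    (Valid f (pairData f τ c ρ m).2 ∧ (∀ i < m, (pairData f τ c ρ m).2 i = ρ i) ∧
      (∀ i, m ≤ i → ∃ w ∈ BL f τ c.hτ c.k₀ (pairData f τ c ρ m).2 i,
        (pairData f τ c ρ m).2 i = f w)) ∧
    c.δ < dist (f (xlim f τ c.hτ (pairData f τ c ρ m).1))
      (f (xlim f τ c.hτ (pairData f τ c ρ m).2)) := by
  have hP := pairData f τ c ρ m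
  simp only [pairData, dif_pos h]
  set H := c.hpair ρ m h.1.1 (fun i hi => h.1.2.1 i hi) h.2
      (fun i hi _ => h.1.2.2 i hi) with hH
  have H1 := ((mem_BL_succ f τ c.hτ).mp H.choose_spec.1).choose_spec
  have H2 := ((mem_BL_succ f τ c.hτ).mp H.choose_spec.2.choose_spec.1).choose_spec
  refine ⟨⟨H1.1, H1.2.1, H1.2.2.1⟩, ⟨H2.1, H2.2.1, H2.2.2.1⟩, ?_⟩
  rw [← H1.2.2.2, ← H2.2.2.2]
  exact H.choose_spec.2.choose_spec.2

/-- the machine step, driven by a letter from `Bool × Bool`. -/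
noncomputable def mstep (ρ : ℕ → Y) (m : ℕ) (a : Bool × Bool) : ℕ → Y :=
  if a.1 then (if a.2 then (pairData f τ c ρ m).1 else (pairData f τ c ρ m).2) else ρ

/-- the letter extracted from Player II's move `v`. -/
noncomputable def letter (ρ : ℕ → Y) (m : ℕ) (v : Y) : Bool × Bool :=
  (if dist v (f (xlim f τ c.hτ ρ)) < c.δ/4 then true else false,
   if c.δ/2 ≤ dist (f (xlim f τ c.hτ (pairData f τ c ρ m).1)) v then true else false)

/-- the machine step, driven by Player II's move. -/
noncomputable def hstep (ρ : ℕ → Y) (m : ℕ) (v : Y) : ℕ → Y :=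
  mstep f τ c ρ m (letter f τ c ρ m v)

/-- the initial state. -/
noncomputable def rho0 : ℕ → Y :=
  (exists_guided f τ c.hτ c.k₀ c.s c.hs c.n').choose

/-- length of the initial node. -/
def nn (c : Ctx f τ) : ℕ := c.n' + 1

lemma nn_def : nn f τ c = c.n' + 1 := rfl

lemma rho0_ok : OKRun f τ c (rho0 f τ c) := by
  obtain ⟨h1, h2, h3⟩ := (exists_guided f τ c.hτ c.k₀ c.s c.hs c.n').choose_spec
  exact ⟨h1, fun i hi => h2 i hi, h3⟩

lemma mstep_ok {ρ : ℕ → Y} {m : ℕ} (hρ : OKRun f τ c ρ) (hm : c.n' < m)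
    (a : Bool × Bool) : OKRun f τ c (mstep f τ c ρ m a) := by
  have key : ∀ γ : ℕ → Y, Valid f γ → (∀ i < m, γ i = ρ i) →
      (∀ i, m ≤ i → ∃ w ∈ BL f τ c.hτ c.k₀ γ i, γ i = f w) → OKRun f τ c γ := by
    intro γ hv hag hg
    refine ⟨hv, fun i hi => (hag i (lt_trans hi hm)).trans (hρ.2.1 i hi), fun i hi => ?_⟩
    rcases lt_or_ge i m with him | him
    · obtain ⟨w, hw, hwe⟩ := hρ.2.2 i hi
      have hcg : BL f τ c.hτ c.k₀ ρ i = BL f τ c.hτ c.k₀ γ i :=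
        BL_congr f τ c.hτ c.k₀ (fun j hj => (hag j (lt_trans hj him)).symm)
      exact ⟨w, hcg ▸ hw, (hag i him).trans hwe⟩
    · exact hg i him
  rw [mstep]
  rcases a with ⟨a1, a2⟩
  dsimp only
  by_cases h1 : a1 <;> simp only [h1, if_true, if_false]
  · have hsp := pairData_spec f τ c ⟨hρ, hm⟩
    by_cases h2 : a2 <;> simp only [h2, if_true, if_false]
    · exact key _ hsp.1.1 hsp.1.2.1 hsp.1.2.2
    · exact key _ hsp.2.1.1 hsp.2.1.2.1 hsp.2.1.2.2
  · exact hρ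

lemma mstep_agree {ρ : ℕ → Y} {m : ℕ} (hρ : OKRun f τ c ρ) (hm : c.n' < m)
    (a : Bool × Bool) : ∀ i < m, mstep f τ c ρ m a i = ρ i := by
  intro i hi
  rw [mstep]
  rcases a with ⟨a1, a2⟩
  dsimp only
  by_cases h1 : a1 <;> simp only [h1, if_true, if_false]
  · have hsp := pairData_spec f τ c ⟨hρ, hm⟩
    by_cases h2 : a2 <;> simp only [h2, if_true, if_false]
    · exact hsp.1.2.1 i hi
    · exact hsp.2.1.2.1 i hi
  · rfl

/-- machine states along a code -/
noncomputable def MSt (α : ℕ → Bool × Bool) : ℕ → (ℕ → Y) :=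
  fun m => Nat.rec (rho0 f τ c) (fun m ρ => mstep f τ c ρ (nn f τ c + m) (α m)) m

lemma MSt_zero (α : ℕ → Bool × Bool) : MSt f τ c α 0 = rho0 f τ c := rfl

lemma MSt_succ (α : ℕ → Bool × Bool) (m : ℕ) :
    MSt f τ c α (m+1) = mstep f τ c (MSt f τ c α m) (nn f τ c + m) (α m) := rfl

lemma MSt_ok (α : ℕ → Bool × Bool) (m : ℕ) : OKRun f τ c (MSt f τ c α m) := by
  induction m with
  | zero => exact rho0_ok f τ c
  | succ m ih =>
      rw [MSt_succ]
      exact mstep_ok f τ c ih (by have := nn_def f τ c; omega) (α m)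

lemma MSt_stab (α : ℕ → Bool × Bool) (m m' : ℕ) (h : m ≤ m') :
    ∀ i < nn f τ c + m, MSt f τ c α m' i = MSt f τ c α m i := by
  induction m', h using Nat.le_induction with
  | base => intro i _; rfl
  | succ m' hmm ih =>
      intro i hi
      rw [MSt_succ]
      rw [mstep_agree f τ c (MSt_ok f τ c α m') (by have := nn_def f τ c; omega) (α m') i
        (by have := nn_def f τ c; omega)]
      exact ih i hi

lemma MSt_congr (α α' : ℕ → Bool × Bool) (m : ℕ) (h : ∀ j < m, α j = α' j) :
    MSt f τ c α m = MSt f τ c α' m := by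
  induction m with
  | zero => rfl
  | succ m ih =>
      rw [MSt_succ, MSt_succ, ih (fun j hj => h j (by omega)), h m (by omega)]

/-- the infinite run determined by a code. -/
noncomputable def Rrun (α : ℕ → Bool × Bool) : ℕ → Y :=
  fun i => MSt f τ c α i i

lemma Rrun_eq (α : ℕ → Bool × Bool) (m : ℕ) :
    ∀ i < nn f τ c + m, Rrun f τ c α i = MSt f τ c α m i := by
  intro i hi
  rcases le_total m i with h | h
  · exact MSt_stab f τ c α m i h i hi
  · exact (MSt_stab f τ c α i m h i (by have := nn_def f τ c; omega)).symm

lemma Rrun_valid (α : ℕ → Bool × Bool) : Valid f (Rrun f τ c α) :=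
  fun i => (MSt_ok f τ c α i).1 i

lemma Rrun_pos (α : ℕ → Bool × Bool) (m : ℕ) :
    pos (Rrun f τ c α) (nn f τ c + m) = pos (MSt f τ c α m) (nn f τ c + m) :=
  pos_congr (fun i hi => Rrun_eq f τ c α m i hi)

/-- the limit point of the run determined by a code. -/
noncomputable def Phi (α : ℕ → Bool × Bool) : X :=
  xlim f τ c.hτ (Rrun f τ c α)

/-- THE COMPACT SET. -/
noncomputable def KK : Set X := Set.range (Phi f τ c)

lemma Phi_continuous : Continuous (Phi f τ c) := by
  rw [continuous_def]
  intro V hV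
  rw [isOpen_iff_mem_nhds]
  intro α hα
  obtain ⟨n, hn⟩ := xlim_basis f τ c.hτ (Rrun_valid f τ c α) hV hα
  have hcyl : {α' : ℕ → Bool × Bool | ∀ j < n, α' j = α j} ⊆ Phi f τ c ⁻¹' V := by
    intro α' hα'
    have hR : ∀ j < n, Rrun f τ c α' j = Rrun f τ c α j := by
      intro j hj
      show MSt f τ c α' j j = MSt f τ c α j j
      rw [MSt_congr f τ c α' α j (fun j' hj' => hα' j' (by omega))]
    have hpos : pos (Rrun f τ c α') n = pos (Rrun f τ c α) n := pos_congr hR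
    have := xlim_mem f τ c.hτ (Rrun_valid f τ c α') n
    rw [hpos] at this
    exact hn this
  refine Filter.mem_of_superset ?_ hcyl
  have : {α' : ℕ → Bool × Bool | ∀ j < n, α' j = α j} =
      ⋂ j ∈ Finset.range n, {α' : ℕ → Bool × Bool | α' j = α j} := by
    ext α'; simp [Finset.mem_range]
  rw [this]
  refine (isOpen_biInter_finset (fun j _ => ?_)).mem_nhds (by simp)
  have : {α' : ℕ → Bool × Bool | α' j = α j} =
      (fun α' : ℕ → Bool × Bool => α' j) ⁻¹' {α j} := rfl
  rw [this]
  exact (continuous_apply j).isOpen_preimage _ (isOpen_discrete _)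

lemma KK_compact : IsCompact (KK f τ c) :=
  isCompact_range (Phi_continuous f τ c)

/-! ### The history machine (driven by Player II's actual moves) -/

/-- machine states along a play of Player II -/
noncomputable def HSt (y : ℕ → Y) : ℕ → (ℕ → Y) :=
  fun m => Nat.rec (rho0 f τ c) (fun m ρ => hstep f τ c ρ (nn f τ c + m) (y m)) m

lemma HSt_succ (y : ℕ → Y) (m : ℕ) :
    HSt f τ c y (m+1) = hstep f τ c (HSt f τ c y m) (nn f τ c + m) (y m) := rfl

/-- the code of a play -/
noncomputable def alphaOf (y : ℕ → Y) : ℕ → Bool × Bool :=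
  fun m => letter f τ c (HSt f τ c y m) (nn f τ c + m) (y m)

lemma MSt_alphaOf (y : ℕ → Y) (m : ℕ) :
    MSt f τ c (alphaOf f τ c y) m = HSt f τ c y m := by
  induction m with
  | zero => rfl
  | succ m ih => rw [MSt_succ, ih]; rfl

lemma HSt_ok (y : ℕ → Y) (m : ℕ) : OKRun f τ c (HSt f τ c y m) := by
  rw [← MSt_alphaOf f τ c y m]; exact MSt_ok f τ c _ m

lemma HSt_stab (y : ℕ → Y) (m m' : ℕ) (h : m ≤ m') :
    ∀ i < nn f τ c + m, HSt f τ c y m' i = HSt f τ c y m i := by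
  rw [← MSt_alphaOf f τ c y m', ← MSt_alphaOf f τ c y m]
  exact MSt_stab f τ c _ m m' h

lemma HSt_congr (y y' : ℕ → Y) (m : ℕ) (h : ∀ j < m, y j = y' j) :
    HSt f τ c y m = HSt f τ c y' m := by
  induction m with
  | zero => rfl
  | succ m ih =>
      rw [HSt_succ, HSt_succ, ih (fun j hj => h j (by omega)), h m (by omega)]

/-- the current target -/
noncomputable def targ (y : ℕ → Y) (m : ℕ) : X := xlim f τ c.hτ (HSt f τ c y m)

lemma HSt_of_not_trig {y : ℕ → Y} {m : ℕ}
    (h : ¬ (dist (y m) (f (targ f τ c y m)) < c.δ/4)) :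
    HSt f τ c y (m+1) = HSt f τ c y m := by
  rw [HSt_succ, hstep, mstep, letter]
  simp only [targ] at h
  simp [if_neg h]

lemma trig_step {y : ℕ → Y} {m : ℕ}
    (h : dist (y m) (f (targ f τ c y m)) < c.δ/4) :
    c.δ/2 ≤ dist (f (targ f τ c y (m+1))) (y m) := by
  have hok := HSt_ok f τ c y m
  have hm : c.n' < nn f τ c + m := by have := nn_def f τ c; omega
  have hsp := pairData_spec f τ c ⟨hok, hm⟩
  simp only [targ] at h ⊢
  rw [HSt_succ, hstep, mstep, letter]
  simp only [if_pos h]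
  by_cases hb : c.δ/2 ≤
      dist (f (xlim f τ c.hτ (pairData f τ c (HSt f τ c y m) (nn f τ c + m)).1)) (y m)
  · simp only [if_pos hb, if_true]
    simpa using hb
  · simp only [if_neg hb, if_false]
    push_neg at hb
    have htri := dist_triangle
      (f (xlim f τ c.hτ (pairData f τ c (HSt f τ c y m) (nn f τ c + m)).1))
      (y m)
      (f (xlim f τ c.hτ (pairData f τ c (HSt f τ c y m) (nn f τ c + m)).2))
    have hgap := hsp.2.2
    have hcomm := dist_comm
      (f (xlim f τ c.hτ (pairData f τ c (HSt f τ c y m) (nn f τ c + m)).2)) (y m)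
    simp only [Bool.false_eq_true, if_false, if_true]
    linarith

/-! ### The strategy for Player I on the compact set -/

lemma getD_pos (y : ℕ → Y) (n i : ℕ) (d : Y) (hi : i < n) : (pos y n).getD i d = y i := by
  rw [pos, List.getD_eq_getElem?_getD]
  simp [List.getElem?_map, List.getElem?_range hi]

lemma getD_append_lt (l : List Y) (v d : Y) (i : ℕ) (hi : i < l.length) :
    (l ++ [v]).getD i d = l.getD i d := by
  rw [List.getD_eq_getElem?_getD, List.getD_eq_getElem?_getD, List.getElem?_append,
    if_pos hi]

lemma getD_append_len (l : List Y) (v d : Y) : (l ++ [v]).getD l.length d = v := by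
  rw [List.getD_eq_getElem?_getD]
  simp

/-- the current state of Player I's simulated run after a finite play of II -/
noncomputable def stratR (l : List Y) : ℕ → Y :=
  HSt f τ c (fun i => l.getD i (y0 f τ c.hτ)) l.length

/-- PLAYER I'S STRATEGY on the compact set `KK`. -/
noncomputable def strat (l : List Y) : Set (KK f τ c) :=
  Subtype.val ⁻¹' (τ (pos (stratR f τ c l) (nn f τ c + l.length)))

lemma stratR_pos (y : ℕ → Y) (n : ℕ) : stratR f τ c (pos y n) = HSt f τ c y n := by
  rw [stratR]
  have hlen : (pos y n).length = n := by simp [pos]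
  rw [hlen]
  exact HSt_congr f τ c _ y n (fun j hj => getD_pos y n j _ hj)

lemma stratR_ok (l : List Y) : OKRun f τ c (stratR f τ c l) := HSt_ok f τ c _ _

lemma strat_node_valid (l : List Y) :
    ∀ z ∈ pos (stratR f τ c l) (nn f τ c + l.length), z ∈ Set.range f :=
  mem_pos (stratR_ok f τ c l).1 _

lemma hstep_agree {ρ : ℕ → Y} {m : ℕ} (hρ : OKRun f τ c ρ) (hm : c.n' < m) (v : Y) :
    ∀ i < m, hstep f τ c ρ m v i = ρ i :=
  mstep_agree f τ c hρ hm _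

lemma stratR_append (l : List Y) (v : Y) :
    stratR f τ c (l ++ [v]) = hstep f τ c (stratR f τ c l) (nn f τ c + l.length) v := by
  rw [stratR, stratR]
  have hlen : (l ++ [v]).length = l.length + 1 := by simp
  rw [hlen, HSt_succ]
  have h1 : HSt f τ c (fun i => (l ++ [v]).getD i (y0 f τ c.hτ)) l.length =
      HSt f τ c (fun i => l.getD i (y0 f τ c.hτ)) l.length :=
    HSt_congr f τ c _ _ l.length (fun j hj => getD_append_lt l v _ j hj)
  rw [h1]
  have h2 : (l ++ [v]).getD l.length (y0 f τ c.hτ) = v := getD_append_len l v _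
  rw [h2]

lemma strat_mono (l : List Y) (v : Y) : strat f τ c (l ++ [v]) ⊆ strat f τ c l := by
  apply Set.preimage_mono
  have hlen : (l ++ [v]).length = l.length + 1 := by simp
  rw [hlen, ← Nat.add_assoc, pos_succ]
  have hagree : ∀ i < nn f τ c + l.length,
      stratR f τ c (l ++ [v]) i = stratR f τ c l i := by
    intro i hi
    rw [stratR_append]
    exact hstep_agree f τ c (stratR_ok f τ c l) (by have := nn_def f τ c; omega) v i hi
  rw [pos_congr (fun i hi => hagree i hi)]
  refine c.hτ.2.1 _ _ (strat_node_valid f τ c l) ?_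
  exact (stratR_ok f τ c (l ++ [v])).1 _

lemma strat_open (l : List Y) : IsOpen (strat f τ c l) :=
  ((c.hτ.1 _ (strat_node_valid f τ c l)).1).preimage continuous_subtype_val

lemma targ_mem_KK (l : List Y) : xlim f τ c.hτ (stratR f τ c l) ∈ KK f τ c := by
  set yf : ℕ → Y := fun i => l.getD i (y0 f τ c.hτ) with hyf
  set L := l.length with hL
  set α : ℕ → Bool × Bool := fun j => if j < L then alphaOf f τ c yf j else (false, false)
    with hα
  refine ⟨α, ?_⟩
  have hMle : ∀ m, m ≤ L → MSt f τ c α m = HSt f τ c yf m := by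
    intro m hm
    rw [MSt_congr f τ c α (alphaOf f τ c yf) m (fun j hj => if_pos (by omega)),
      MSt_alphaOf]
  have hMge : ∀ m, L ≤ m → MSt f τ c α m = MSt f τ c α L := by
    intro m hm
    induction m, hm using Nat.le_induction with
    | base => rfl
    | succ m hLm ih =>
        rw [MSt_succ, ih]
        have hm' : α m = (false, false) := if_neg (by omega)
        rw [hm', mstep]
        simp
  have hR : Rrun f τ c α = HSt f τ c yf L := by
    funext i
    rcases le_total i L with h | h
    · show MSt f τ c α i i = _
      rw [hMle i h]
      exact (HSt_stab f τ c yf i L h i (by have := nn_def f τ c; omega)).symm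
    · show MSt f τ c α i i = _
      rw [hMge i h, hMle L le_rfl]
  show Phi f τ c α = _
  rw [Phi, hR]
  rfl

lemma strat_nonempty (l : List Y) : (strat f τ c l).Nonempty := by
  refine ⟨⟨xlim f τ c.hτ (stratR f τ c l), targ_mem_KK f τ c l⟩, ?_⟩
  show xlim f τ c.hτ (stratR f τ c l) ∈ τ (pos (stratR f τ c l) (nn f τ c + l.length))
  exact xlim_mem f τ c.hτ (stratR_ok f τ c l).1 _

/-- the main winning property of the strategy. -/
lemma strat_win (y : ℕ → Y) :
    ∃ x : (KK f τ c), SeqConvergesTo (fun n => strat f τ c (pos y n)) x ∧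
      ¬ Tendsto y atTop (𝓝 (f (x : X))) := by
  set α := alphaOf f τ c y with hαdef
  set R := Rrun f τ c α with hRdef
  have hxm : Phi f τ c α ∈ KK f τ c := ⟨α, rfl⟩
  set x : X := Phi f τ c α with hxdef
  have hRval : Valid f R := Rrun_valid f τ c α
  have hnode : ∀ n, pos (stratR f τ c (pos y n)) (nn f τ c + n) =
      pos R (nn f τ c + n) := by
    intro n
    rw [stratR_pos, hRdef, Rrun_pos f τ c α n, hαdef, MSt_alphaOf]
  have hstrat : ∀ n, strat f τ c (pos y n) =
      Subtype.val ⁻¹' (τ (pos R (nn f τ c + n))) := by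
    intro n
    rw [strat]
    have hlen : (pos y n).length = n := by simp [pos]
    rw [hlen, hnode n]
  have hxR : x = xlim f τ c.hτ R := rfl
  refine ⟨⟨x, hxm⟩, ⟨?_, ?_, ?_⟩, ?_⟩
  · -- decreasing
    intro n
    show strat f τ c (pos y (n+1)) ⊆ strat f τ c (pos y n)
    rw [pos_succ]
    exact strat_mono f τ c _ _
  · -- membership
    intro n
    show (⟨x, hxm⟩ : KK f τ c) ∈ strat f τ c (pos y n)
    rw [hstrat n]
    show x ∈ τ (pos R (nn f τ c + n))
    rw [hxR]
    exact xlim_mem f τ c.hτ hRval _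
  · -- basis
    intro V' hV' hxV'
    obtain ⟨V, hV, rfl⟩ := isOpen_induced_iff.mp hV'
    have hxV : x ∈ V := hxV'
    obtain ⟨j, hj⟩ := xlim_basis f τ c.hτ hRval hV (hxR ▸ hxV)
    refine ⟨j, ?_⟩
    show strat f τ c (pos y j) ⊆ _
    rw [hstrat j]
    refine Set.preimage_mono ?_
    exact subset_trans (tau_anti f τ c.hτ hRval (by omega)) hj
  · -- y does not converge to f x
    by_cases hfin : ∃ N, ∀ n, N ≤ n → ¬ (dist (y n) (f (targ f τ c y n)) < c.δ/4)
    · obtain ⟨N, hN⟩ := hfin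
      have hstable : ∀ n, N ≤ n → HSt f τ c y n = HSt f τ c y N := by
        intro n hn
        induction n, hn using Nat.le_induction with
        | base => rfl
        | succ n hNn ih => rw [HSt_of_not_trig f τ c (hN n hNn), ih]
      have hfun : Rrun f τ c α = HSt f τ c y N := by
        funext i
        show MSt f τ c α i i = HSt f τ c y N i
        rw [hαdef, MSt_alphaOf]
        rcases le_total i N with h | h
        · exact (HSt_stab f τ c y i N h i (by have := nn_def f τ c; omega)).symm
        · rw [hstable i h]
      have hxe : x = targ f τ c y N := by
        simp only [hxdef, Phi, targ]
        exact congrArg _ hfun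
      intro htd
      rw [Metric.tendsto_atTop] at htd
      obtain ⟨M, hM⟩ := htd (c.δ/4) (by linarith [c.hδ])
      have h1 := hN (max N M) (le_max_left _ _)
      have h2 := hM (max N M) (le_max_right _ _)
      have h3 : targ f τ c y (max N M) = targ f τ c y N := by
        simp only [targ]
        rw [hstable _ (le_max_left _ _)]
      rw [h3, ← hxe] at h1
      exact h1 h2
    · push_neg at hfin
      intro htd
      rw [Metric.tendsto_atTop] at htd
      obtain ⟨M, hM⟩ := htd (c.δ/16) (by linarith [c.hδ])
      obtain ⟨n₁, hn₁M, htrig₁⟩ := hfin M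
      have hP : ∃ m, n₁ + 1 ≤ m ∧ dist (y m) (f (targ f τ c y m)) < c.δ/4 :=
        hfin (n₁+1)
      set n₂ := Nat.find hP with hn₂def
      obtain ⟨hn₂ge, htrig₂⟩ := Nat.find_spec hP
      rw [← hn₂def] at hn₂ge htrig₂
      have hmin : ∀ m, n₁ + 1 ≤ m → m < n₂ →
          ¬ (dist (y m) (f (targ f τ c y m)) < c.δ/4) := by
        intro m h1 h2 hcon
        exact (Nat.find_min hP h2) ⟨h1, hcon⟩
      have hstab2 : ∀ m, n₁+1 ≤ m → m ≤ n₂ → HSt f τ c y m = HSt f τ c y (n₁+1) := by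
        intro m h1 h2
        induction m, h1 using Nat.le_induction with
        | base => rfl
        | succ m hm ih =>
            rw [HSt_of_not_trig f τ c (hmin m hm (by omega)), ih (by omega)]
      have htargeq : targ f τ c y n₂ = targ f τ c y (n₁+1) := by
        simp only [targ]
        rw [hstab2 n₂ hn₂ge le_rfl]
      have hfar := trig_step f τ c htrig₁
      rw [htargeq] at htrig₂
      have d1 := hM n₁ hn₁M
      have d2 := hM n₂ (by omega)
      have t1 := dist_triangle (f (targ f τ c y (n₁+1))) (y n₂) (y n₁)
      have hcoe : (((⟨x, hxm⟩ : KK f τ c) : X)) = x := rfl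
      rw [hcoe] at d1 d2
      have t2 := dist_triangle (y n₂) (f x) (y n₁)
      have e1 := dist_comm (f (targ f τ c y (n₁+1))) (y n₂)
      have e2 := dist_comm (f x) (y n₁)
      have e3 := dist_comm (y n₁) (f x)
      have hδ := c.hδ
      linarith

end PlayerIAux

/-- If Player I has a winning strategy in `G(f)`, then there exists a compact `K ⊆ X`
such that Player I has a winning strategy in `G(f↾K)`, where `f↾K : K → Y` is the
restriction of `f` to `K` with the subspace topology. -/
theorem playerI_winning_restrict_compact {X Y : Type*}
    [TopologicalSpace X] [TopologicalSpace Y]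
    [SeparableSpace X] [MetrizableSpace X] [SeparableSpace Y] [MetrizableSpace Y]
    (f : X → Y) (τ : List Y → Set X) (hτ : IsWinningI f τ) :
    ∃ K : Set X, IsCompact K ∧
      ∃ τ' : List Y → Set K, IsWinningI (K.restrict f) τ' := by
  letI : MetricSpace Y := TopologicalSpace.metrizableSpaceMetric Y
  obtain ⟨k₀, s, n', δ, hs, hδ, hpair⟩ := PlayerIAux.exists_good f τ hτ
  let c : PlayerIAux.Ctx f τ := ⟨hτ, k₀, s, n', δ, hs, hδ, hpair⟩
  refine ⟨PlayerIAux.KK f τ c, PlayerIAux.KK_compact f τ c, PlayerIAux.strat f τ c,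
    ?_, ?_, ?_⟩
  · intro l _
    exact ⟨PlayerIAux.strat_open f τ c l, PlayerIAux.strat_nonempty f τ c l⟩
  · intro l v _ _
    exact PlayerIAux.strat_mono f τ c l v
  · intro y _
    obtain ⟨x, h1, h2⟩ := PlayerIAux.strat_win f τ c y
    exact ⟨x, h1, h2⟩
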